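/- arXiv:2602.23134 — 6 statements merged into one kernel-verified Lean document; each statement's English description precedes it below -/
import Mathlib

section
/- Let N ≥ 2 be an integer, r > 0, Γ ∈ ℝ \ {0} and γ ∈ ℝ. Define the angular speed a = Γ(N − 1 + 2γ)/(4πr²) and, for j = 1,…,N, the trajectories z_j(t) = r(cos(2πj/N + a t), sin(2πj/N + a t)), together with z_{N+1}(t) = (0,0), with circulations Γ_j = Γ for 1 ≤ j ≤ N and Γ_{N+1} = γΓ. Then for every t ∈ ℝ and every j ∈ {1,…,N+1}, the points z_1(t),…,z_{N+1}(t) are pairwise distinct and z_j'(t) = Σ_{l=1, l≠j}^{N+1} (Γ_l/(2π)) · (z_j(t) − z_l(t))^⊥ / |z_j(t) − z_l(t)|², i.e. the uniformly rotating polygon with a central vortex is an exact solution of the Helmholtz–Kirchhoff point-vortex system. -/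
open Real

lemma aux_pair (x : ℂ) (hx1 : x ≠ 1) (hx0 : x ≠ 0) :
    (1 - x)⁻¹ + (1 - x⁻¹)⁻¹ = 1 := by
  have hx1' : x - 1 ≠ 0 := sub_ne_zero.mpr hx1
  have h : (1 - x⁻¹) = (x - 1) * x⁻¹ := by field_simp
  have e1 : (1 - x)⁻¹ = -(x - 1)⁻¹ := by rw [neg_inv, neg_sub]
  have e2 : (1 - x⁻¹)⁻¹ = (x - 1)⁻¹ * x := by rw [h, mul_inv, inv_inv]
  rw [e1, e2]
  have : -(x - 1)⁻¹ + (x - 1)⁻¹ * x = (x - 1)⁻¹ * (x - 1) := by ring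
  rw [this, inv_mul_cancel₀ hx1']

lemma aux_sum_inv (N : ℕ) (hN : 2 ≤ N) (ω : ℂ) (hωN : ω ^ N = 1)
    (hω1 : ∀ k ∈ Finset.Ico 1 N, ω ^ k ≠ 1) :
    ∑ k ∈ Finset.Ico 1 N, (1 - ω ^ k)⁻¹ = ((N : ℂ) - 1) / 2 := by
  have hω0 : ω ≠ 0 := by
    intro h
    rw [h, zero_pow (by omega)] at hωN
    exact one_ne_zero hωN.symm
  set S := ∑ k ∈ Finset.Ico 1 N, (1 - ω ^ k)⁻¹ with hS
  have hrefl : S = ∑ k ∈ Finset.Ico 1 N, (1 - ω ^ (N - k))⁻¹ := by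
    rw [hS]
    refine Finset.sum_nbij' (fun k => N - k) (fun k => N - k) ?_ ?_ ?_ ?_ ?_
    · intro a ha; simp only [Finset.mem_Ico] at *; omega
    · intro a ha; simp only [Finset.mem_Ico] at *; omega
    · intro a ha; simp only [Finset.mem_Ico] at ha; omega
    · intro a ha; simp only [Finset.mem_Ico] at ha; omega
    · intro a ha; simp only [Finset.mem_Ico] at ha
      congr 3
      omega
  have h2S : S + S = ∑ k ∈ Finset.Ico 1 N, ((1 - ω ^ k)⁻¹ + (1 - ω ^ (N - k))⁻¹) := by
    rw [Finset.sum_add_distrib, ← hS, ← hrefl]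
  have hone : ∀ k ∈ Finset.Ico 1 N, (1 - ω ^ k)⁻¹ + (1 - ω ^ (N - k))⁻¹ = 1 := by
    intro k hk
    simp only [Finset.mem_Ico] at hk
    have hinv : ω ^ (N - k) = (ω ^ k)⁻¹ := by
      have h : ω ^ (N - k) * ω ^ k = 1 := by
        rw [← pow_add, Nat.sub_add_cancel (by omega)]; exact hωN
      field_simp
      linear_combination h
    rw [hinv]
    exact aux_pair _ (hω1 k (Finset.mem_Ico.mpr ⟨hk.1, hk.2⟩)) (pow_ne_zero _ hω0)
  rw [Finset.sum_congr rfl hone, Finset.sum_const, Nat.card_Ico, nsmul_eq_mul] at h2S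
  have h2 : (2 : ℂ) * S = ((N : ℂ) - 1) := by
    rw [Nat.cast_sub (by omega)] at h2S
    push_cast at h2S
    linear_combination h2S
  linear_combination h2 / 2

lemma aux_int (k n M : ℤ) (hM : 0 < M) (h : k = n * M) (h1 : -M < k) (h2 : k < M) :
    k = 0 := by
  rcases lt_trichotomy n 0 with h' | h' | h'
  · nlinarith
  · simp [h', h]
  · nlinarith

lemma aux_exp_real_eq_one_iff (y : ℝ) :
    Complex.exp ((y : ℂ) * Complex.I) = 1 ↔ ∃ n : ℤ, y = n * (2 * π) := by
  rw [Complex.exp_eq_one_iff]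
  constructor
  · rintro ⟨n, h⟩
    refine ⟨n, ?_⟩
    have := congrArg Complex.im h
    simpa using this
  · rintro ⟨n, h⟩
    exact ⟨n, by rw [h]; push_cast; ring⟩

lemma aux_exp_pow_ne_one (N : ℕ) (hN : 2 ≤ N) (x : ℝ)
    (hx : x = 2 * π / N ∨ x = -(2 * π / N))
    (k : ℕ) (hk : k ∈ Finset.Ico 1 N) :
    Complex.exp ((x : ℂ) * Complex.I) ^ k ≠ 1 := by
  simp only [Finset.mem_Ico] at hk
  have hNR : (N : ℝ) ≠ 0 := Nat.cast_ne_zero.mpr (by omega)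
  have hπ : (π : ℝ) ≠ 0 := Real.pi_ne_zero
  have h2π : (2 * π : ℝ) ≠ 0 := by positivity
  rw [← Complex.exp_nat_mul]
  intro h
  have h' : Complex.exp (((k * x : ℝ) : ℂ) * Complex.I) = 1 := by
    rw [← h]; congr 1; push_cast; ring
  obtain ⟨n, hn⟩ := (aux_exp_real_eq_one_iff _).1 h'
  rcases hx with hx | hx
  · rw [hx] at hn
    have h3 : (2 * π) * ((k : ℝ)) = (2 * π) * ((n : ℝ) * N) := by
      field_simp at hn
      linear_combination (2 * π) * hn
    have h4 : (k : ℝ) = (n : ℝ) * N := mul_left_cancel₀ h2π h3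
    have h5 : (k : ℤ) = n * N := by exact_mod_cast h4
    have := aux_int (k : ℤ) n (N : ℤ) (by exact_mod_cast (by omega : 0 < N)) h5
      (by omega) (by exact_mod_cast hk.2)
    omega
  · rw [hx] at hn
    have h3 : (2 * π) * (-(k : ℝ)) = (2 * π) * ((n : ℝ) * N) := by
      field_simp at hn
      linear_combination (2 * π) * hn
    have h4 : (-(k : ℝ)) = (n : ℝ) * N := mul_left_cancel₀ h2π h3
    have h5 : (-(k : ℤ)) = n * N := by exact_mod_cast h4
    have := aux_int (-(k : ℤ)) n (N : ℤ) (by exact_mod_cast (by omega : 0 < N)) h5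
      (by omega) (by omega)
    omega

set_option maxHeartbeats 1000000 in
/-- The uniformly rotating regular `N`-gon of identical point vortices of circulation `Γ`,
together with a central vortex of circulation `γΓ`, is an exact solution of the
Helmholtz–Kirchhoff point-vortex system: at every time the vortices are pairwise distinct
and each trajectory satisfies the point-vortex ODE. -/
theorem polygon_with_central_vortex_solves_point_vortex_system
    (N : ℕ) (hN : 2 ≤ N) (r Γ γ : ℝ) (hr : 0 < r) (hΓ : Γ ≠ 0)
    (a : ℝ) (ha : a = Γ * ((N : ℝ) - 1 + 2 * γ) / (4 * π * r ^ 2))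
    (z : Fin (N + 1) → ℝ → ℝ × ℝ)
    (hz : ∀ (j : Fin (N + 1)) (t : ℝ),
      z j t =
        if (j : ℕ) < N then
          (r * Real.cos (2 * π * ((j : ℕ) + 1) / N + a * t),
           r * Real.sin (2 * π * ((j : ℕ) + 1) / N + a * t))
        else (0, 0))
    (Γv : Fin (N + 1) → ℝ)
    (hΓv : ∀ j : Fin (N + 1), Γv j = if (j : ℕ) < N then Γ else γ * Γ) :
    ∀ t : ℝ,
      (∀ j l : Fin (N + 1), j ≠ l → z j t ≠ z l t) ∧
      (∀ j : Fin (N + 1),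
        HasDerivAt (z j)
          (∑ l ∈ Finset.univ.erase j,
            ((Γv l / (2 * π)) /
              (((z j t).1 - (z l t).1) ^ 2 + ((z j t).2 - (z l t).2) ^ 2)) •
            (-((z j t).2 - (z l t).2), (z j t).1 - (z l t).1)) t) := by
  intro t
  have hπ : (π : ℝ) ≠ 0 := Real.pi_ne_zero
  have h2π : (2 * π : ℝ) ≠ 0 := by positivity
  have hNR : (N : ℝ) ≠ 0 := Nat.cast_ne_zero.mpr (by omega)
  have hr' : r ≠ 0 := ne_of_gt hr
  set θf : ℕ → ℝ := fun m => 2 * π * (m + 1) / N + a * t with hθf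
  set E : ℕ → ℂ := fun m => Complex.exp ((θf m : ℂ) * Complex.I) with hE
  set W : Fin (N + 1) → ℂ := fun m => if (m : ℕ) < N then (r : ℂ) * E (m : ℕ) else 0 with hW
  have hzW : ∀ m : Fin (N + 1), z m t = ((W m).re, (W m).im) := by
    intro m
    rw [hz, hW]
    by_cases h : (m : ℕ) < N
    · rw [if_pos h]
      dsimp only
      rw [if_pos h, hE]
      dsimp only
      rw [Complex.re_ofReal_mul, Complex.im_ofReal_mul,
        Complex.exp_ofReal_mul_I_re, Complex.exp_ofReal_mul_I_im]
    · rw [if_neg h]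
      dsimp only
      rw [if_neg h]
      simp
  have hEne : ∀ m, E m ≠ 0 := fun m => Complex.exp_ne_zero _
  have hnormE : ∀ m, Complex.normSq (E m) = 1 := by
    intro m
    rw [hE]
    dsimp only
    rw [← Complex.sq_norm, Complex.norm_exp_ofReal_mul_I, one_pow]
  have honeq : ∀ q : ℕ, Complex.exp (((q * (2 * π) : ℝ) : ℂ) * Complex.I) = 1 := by
    intro q
    rw [aux_exp_real_eq_one_iff]
    exact ⟨q, by push_cast; ring⟩
  have hEmod : ∀ m : ℕ, E m = E (m % N) := by
    intro m
    have hm : (m : ℝ) = ((m % N : ℕ) : ℝ) + ((m / N : ℕ) : ℝ) * N := by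
      conv_lhs => rw [← Nat.mod_add_div m N]
      push_cast; ring
    have hθm : θf m = θf (m % N) + ((m / N : ℕ) : ℝ) * (2 * π) := by
      simp only [hθf]
      rw [hm]
      field_simp
      ring
    rw [hE]
    dsimp only
    rw [hθm, Complex.ofReal_add, add_mul, Complex.exp_add, honeq (m / N), mul_one]
  set ω : ℂ := Complex.exp (((2 * π / N : ℝ) : ℂ) * Complex.I) with hω
  set ω' : ℂ := Complex.exp (((-(2 * π / N) : ℝ) : ℂ) * Complex.I) with hω'
  have hωpow : ∀ k : ℕ, ω ^ k = Complex.exp (((k * (2 * π / N) : ℝ) : ℂ) * Complex.I) := by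
    intro k
    rw [hω, ← Complex.exp_nat_mul]
    congr 1; push_cast; ring
  have hω'pow : ∀ k : ℕ, ω' ^ k = Complex.exp (((k * (-(2 * π / N)) : ℝ) : ℂ) * Complex.I) := by
    intro k
    rw [hω', ← Complex.exp_nat_mul]
    congr 1; push_cast; ring
  have hωN : ω ^ N = 1 := by
    rw [hωpow]
    have : ((N : ℝ) * (2 * π / N) : ℝ) = ((1 : ℕ) : ℝ) * (2 * π) := by field_simp; norm_num
    rw [this, honeq 1]
  have hω'N : ω' ^ N = 1 := by
    rw [hω'pow]
    rw [show ((N : ℝ) * (-(2 * π / N)) : ℝ) = (-(N : ℝ)) * (2 * π / N) by ring]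
    have h1 : Complex.exp ((((N : ℝ) * (2 * π / N) : ℝ) : ℂ) * Complex.I) = 1 := by
      have : ((N : ℝ) * (2 * π / N) : ℝ) = ((1 : ℕ) : ℝ) * (2 * π) := by field_simp; norm_num
      rw [this, honeq 1]
    have : Complex.exp (((-(N : ℝ) * (2 * π / N) : ℝ) : ℂ) * Complex.I) *
        Complex.exp ((((N : ℝ) * (2 * π / N) : ℝ) : ℂ) * Complex.I) = 1 := by
      rw [← Complex.exp_add]
      rw [show ((-(N:ℝ) * (2 * π / N) : ℝ) : ℂ) * Complex.I +
          (((N:ℝ) * (2 * π / N) : ℝ) : ℂ) * Complex.I = 0 by push_cast; ring]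
      exact Complex.exp_zero
    rw [h1, mul_one] at this
    exact this
  have hω1 : ∀ k ∈ Finset.Ico 1 N, ω ^ k ≠ 1 := by
    intro k hk
    rw [hω]
    exact aux_exp_pow_ne_one N hN _ (Or.inl rfl) k hk
  have hω'1 : ∀ k ∈ Finset.Ico 1 N, ω' ^ k ≠ 1 := by
    intro k hk
    rw [hω']
    exact aux_exp_pow_ne_one N hN _ (Or.inr rfl) k hk
  have hωne1 : ω ≠ 1 := by
    have := hω1 1 (Finset.mem_Ico.mpr ⟨le_refl 1, by omega⟩)
    simpa using this
  have hEadd : ∀ m k : ℕ, E (m + k) = E m * ω ^ k := by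
    intro m k
    rw [hωpow, hE]
    dsimp only
    rw [← Complex.exp_add]
    congr 1
    have hθ : θf (m + k) = θf m + k * (2 * π / N) := by
      simp only [hθf]
      push_cast
      field_simp
      ring
    rw [hθ]
    push_cast
    ring
  have hconjω : (starRingEnd ℂ) ω' = ω := by
    rw [hω', hω, ← Complex.exp_conj]
    congr 1
    rw [map_mul, Complex.conj_I, Complex.conj_ofReal]
    push_cast
    ring
  -- the complex expression for each vortex position
  have hWj : ∀ (j : Fin (N + 1)), (j : ℕ) < N → W j = (r : ℂ) * E (j : ℕ) := by
    intro j hj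
    rw [hW]; simp [hj]
  have hWlast : ∀ (j : Fin (N + 1)), ¬ ((j : ℕ) < N) → W j = 0 := by
    intro j hj
    rw [hW]; simp [hj]
  have hWne : ∀ (j : Fin (N + 1)), (j : ℕ) < N → W j ≠ 0 := by
    intro j hj
    rw [hWj j hj]
    exact mul_ne_zero (Complex.ofReal_ne_zero.mpr hr') (hEne _)
  -- distinctness
  have hdist : ∀ j l : Fin (N + 1), j ≠ l → z j t ≠ z l t := by
    intro j l hjl heq
    rw [hzW j, hzW l, Prod.mk.injEq] at heq
    have hWeq : W j = W l := Complex.ext heq.1 heq.2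
    by_cases hj : (j : ℕ) < N
    · by_cases hl : (l : ℕ) < N
      · rw [hWj j hj, hWj l hl] at hWeq
        have hEeq : E (j : ℕ) = E (l : ℕ) :=
          mul_left_cancel₀ (Complex.ofReal_ne_zero.mpr hr') hWeq
        have h1 : Complex.exp (((θf (j:ℕ) - θf (l:ℕ) : ℝ) : ℂ) * Complex.I) = 1 := by
          rw [Complex.ofReal_sub, sub_mul, Complex.exp_sub]
          rw [hE] at hEeq
          simp only at hEeq
          rw [hEeq, div_self (Complex.exp_ne_zero _)]
        obtain ⟨n, hn⟩ := (aux_exp_real_eq_one_iff _).1 h1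
        have hθd : θf (j:ℕ) - θf (l:ℕ) = 2 * π * (((j:ℕ):ℝ) - ((l:ℕ):ℝ)) / N := by
          simp only [hθf]; field_simp; ring
        rw [hθd] at hn
        have h3 : (2 * π) * (((j:ℕ):ℝ) - ((l:ℕ):ℝ)) = (2 * π) * ((n : ℝ) * N) := by
          field_simp at hn
          linear_combination (2 * π) * hn
        have h4 : ((j:ℕ):ℝ) - ((l:ℕ):ℝ) = (n : ℝ) * N := mul_left_cancel₀ h2π h3
        have h5 : ((j:ℕ):ℤ) - ((l:ℕ):ℤ) = n * N := by exact_mod_cast h4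
        have h6 := aux_int _ n (N : ℤ) (by exact_mod_cast (by omega : 0 < N)) h5
          (by omega) (by omega)
        have : (j : ℕ) = (l : ℕ) := by omega
        exact hjl (Fin.ext this)
      · rw [hWlast l hl] at hWeq
        exact hWne j hj hWeq
    · by_cases hl : (l : ℕ) < N
      · rw [hWlast j hj] at hWeq
        exact hWne l hl hWeq.symm
      · have : (j : ℕ) = (l : ℕ) := by omega
        exact hjl (Fin.ext this)
  refine ⟨hdist, ?_⟩
  intro j
  -- complex form of the summand
  set c : Fin (N + 1) → ℂ := fun l =>
    ((Γv l / (2 * π)) / Complex.normSq (W j - W l)) • (Complex.I * (W j - W l)) with hc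
  have hcpair : ∀ l : Fin (N + 1),
      (((Γv l / (2 * π)) /
          (((z j t).1 - (z l t).1) ^ 2 + ((z j t).2 - (z l t).2) ^ 2)) •
        (-((z j t).2 - (z l t).2), (z j t).1 - (z l t).1) : ℝ × ℝ)
      = ((c l).re, (c l).im) := by
    intro l
    rw [hzW j, hzW l]
    simp only [hc, Complex.smul_re, Complex.smul_im, Complex.mul_re, Complex.mul_im,
      Complex.I_re, Complex.I_im, Complex.sub_re, Complex.sub_im, Complex.normSq_apply,
      Prod.smul_mk, smul_eq_mul, Prod.mk.injEq]
    constructor <;> ring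
  have hpairsum :
      (∑ l ∈ Finset.univ.erase j,
        (((Γv l / (2 * π)) /
            (((z j t).1 - (z l t).1) ^ 2 + ((z j t).2 - (z l t).2) ^ 2)) •
          (-((z j t).2 - (z l t).2), (z j t).1 - (z l t).1) : ℝ × ℝ))
      = ((∑ l ∈ Finset.univ.erase j, c l).re, (∑ l ∈ Finset.univ.erase j, c l).im) := by
    rw [Finset.sum_congr rfl fun l _ => hcpair l]
    refine Prod.ext ?_ ?_
    · rw [Prod.fst_sum, Complex.re_sum]
    · rw [Prod.snd_sum, Complex.im_sum]
  have hcj : c j = 0 := by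
    simp [hc]
  have hsum_univ : (∑ l ∈ Finset.univ.erase j, c l) = ∑ l, c l :=
    Finset.sum_erase _ hcj
  by_cases hjN : (j : ℕ) < N
  · -- polygon vortex
    -- compute the complex sum
    set jF : Fin N := ⟨(j : ℕ), hjN⟩ with hjF
    have hsplit : (∑ l, c l) = (∑ i : Fin N, c i.castSucc) + c (Fin.last N) :=
      Fin.sum_univ_castSucc c
    have hlast : c (Fin.last N) = (γ * Γ / (2 * π * r)) • (Complex.I * E (j : ℕ)) := by
      rw [hc]
      simp only
      rw [hWlast (Fin.last N) (by simp), hWj j hjN, hΓv]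
      simp only [Fin.val_last, lt_self_iff_false, if_false]
      rw [sub_zero]
      have hn : Complex.normSq ((r : ℂ) * E (j : ℕ)) = r ^ 2 := by
        rw [Complex.normSq_mul, Complex.normSq_ofReal, hnormE, mul_one, sq]
      rw [hn, Complex.real_smul, Complex.real_smul]
      have hco : (γ * Γ / (2 * π) / r ^ 2) * r = γ * Γ / (2 * π * r) := by
        field_simp
      have hcoef : ((γ * Γ / (2 * π) / r ^ 2 : ℝ) : ℂ) * (r : ℂ)
          = ((γ * Γ / (2 * π * r) : ℝ) : ℂ) := by exact_mod_cast congrArg Complex.ofReal hco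
      linear_combination (Complex.I * E (j : ℕ)) * hcoef
    haveI : NeZero N := ⟨by omega⟩
    have hshift : (∑ i : Fin N, c i.castSucc) = ∑ k : Fin N, c (jF + k).castSucc :=
      (Equiv.sum_comp (Equiv.addLeft jF) (fun i => c i.castSucc)).symm
    set g : ℕ → ℂ := fun k =>
      ((Γ / (2 * π)) / Complex.normSq ((r : ℂ) * E (j:ℕ) - (r : ℂ) * (E (j:ℕ) * ω ^ k))) •
        (Complex.I * ((r : ℂ) * E (j:ℕ) - (r : ℂ) * (E (j:ℕ) * ω ^ k))) with hg
    have hterm : ∀ k : Fin N, c (jF + k).castSucc = g (k : ℕ) := by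
      intro k
      have hval : ((jF + k).castSucc : Fin (N + 1)).val = ((j : ℕ) + (k : ℕ)) % N := by
        simp [Fin.val_add, hjF]
      have hvlt : ((jF + k).castSucc : Fin (N + 1)).val < N := by
        rw [hval]; exact Nat.mod_lt _ (by omega)
      rw [hc, hg]
      simp only
      rw [hWj _ hvlt, hWj j hjN, hΓv, if_pos hvlt, hval, ← hEmod, hEadd]
    have hg0 : g 0 = 0 := by
      simp [hg]
    have hgsum : (∑ k : Fin N, c (jF + k).castSucc) = ∑ k ∈ Finset.range N, g k := by
      rw [Finset.sum_congr rfl fun k _ => hterm k]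
      exact Fin.sum_univ_eq_sum_range g N
    have hrange : (∑ k ∈ Finset.range N, g k) = ∑ k ∈ Finset.Ico 1 N, g k := by
      rw [Finset.range_eq_Ico, Finset.sum_eq_sum_Ico_succ_bot (by omega), hg0, zero_add]
    have hgval : ∀ k ∈ Finset.Ico 1 N,
        g k = (Γ / (2 * π * r)) • (Complex.I * E (j:ℕ) * (1 - ω' ^ k)⁻¹) := by
      intro k hk
      have hne : ω ^ k ≠ 1 := hω1 k hk
      have hsub : (1 : ℂ) - ω ^ k ≠ 0 := sub_ne_zero.mpr (by simpa [eq_comm] using hne)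
      have hnun : Complex.normSq (1 - ω ^ k) ≠ 0 := by
        rw [Ne, Complex.normSq_eq_zero]; exact hsub
      have hΔ : (r : ℂ) * E (j:ℕ) - (r : ℂ) * (E (j:ℕ) * ω ^ k)
          = (r : ℂ) * E (j:ℕ) * (1 - ω ^ k) := by ring
      have hnsq : Complex.normSq ((r : ℂ) * E (j:ℕ) * (1 - ω ^ k))
          = r ^ 2 * Complex.normSq (1 - ω ^ k) := by
        rw [Complex.normSq_mul, Complex.normSq_mul, Complex.normSq_ofReal, hnormE]
        ring
      have hconj : ((1 : ℂ) - ω' ^ k)⁻¹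
          = (1 - ω ^ k) * ((Complex.normSq (1 - ω ^ k) : ℝ) : ℂ)⁻¹ := by
        have h1 : (starRingEnd ℂ) (1 - ω' ^ k) = 1 - ω ^ k := by
          rw [map_sub, map_one, map_pow, hconjω]
        have h2 : Complex.normSq (1 - ω' ^ k) = Complex.normSq (1 - ω ^ k) := by
          rw [← Complex.normSq_conj (1 - ω' ^ k), h1]
        rw [Complex.inv_def, h1, h2, Complex.ofReal_inv]
      rw [hg]
      simp only
      rw [hΔ, hnsq, hconj, Complex.real_smul, Complex.real_smul]
      have hco : (Γ / (2 * π) / (r ^ 2 * Complex.normSq (1 - ω ^ k))) * r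
          = Γ / (2 * π * r) * (Complex.normSq (1 - ω ^ k))⁻¹ := by
        field_simp
      have hcoef : ((Γ / (2 * π) / (r ^ 2 * Complex.normSq (1 - ω ^ k)) : ℝ) : ℂ) * (r : ℂ)
          = ((Γ / (2 * π * r) : ℝ) : ℂ) * ((Complex.normSq (1 - ω ^ k) : ℝ) : ℂ)⁻¹ := by
        exact_mod_cast congrArg Complex.ofReal hco
      linear_combination (Complex.I * E (j : ℕ) * (1 - ω ^ k)) * hcoef
    have hIco : (∑ k ∈ Finset.Ico 1 N, g k)
        = (Γ / (2 * π * r)) • (Complex.I * E (j:ℕ) * (((N : ℂ) - 1) / 2)) := by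
      rw [Finset.sum_congr rfl hgval, ← Finset.smul_sum, ← Finset.mul_sum,
        aux_sum_inv N hN ω' hω'N hω'1]
    -- final value of the complex sum
    have hreal : Γ / (2 * π * r) * (((N : ℝ) - 1) / 2) + γ * Γ / (2 * π * r) = r * a := by
      rw [ha]; field_simp; ring
    have hcplx : ((Γ / (2 * π * r) : ℝ) : ℂ) * (((N : ℂ) - 1) / 2)
        + ((γ * Γ / (2 * π * r) : ℝ) : ℂ) = ((r * a : ℝ) : ℂ) := by
      have := congrArg (fun x : ℝ => (x : ℂ)) hreal
      push_cast at this ⊢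
      linear_combination this
    have hTT : (∑ l ∈ Finset.univ.erase j, c l)
        = ((r * a : ℝ) : ℂ) * (Complex.I * E (j : ℕ)) := by
      rw [hsum_univ, hsplit, hshift, hgsum, hrange, hIco, hlast,
        Complex.real_smul, Complex.real_smul]
      linear_combination (Complex.I * E (j:ℕ)) * hcplx
    have hVre : (((r * a : ℝ) : ℂ) * (Complex.I * E (j : ℕ))).re
        = -(r * a * Real.sin (θf (j:ℕ))) := by
      rw [hE]
      simp [Complex.re_ofReal_mul, Complex.mul_re, Complex.exp_ofReal_mul_I_re,
        Complex.exp_ofReal_mul_I_im]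
    have hVim : (((r * a : ℝ) : ℂ) * (Complex.I * E (j : ℕ))).im
        = r * a * Real.cos (θf (j:ℕ)) := by
      rw [hE]
      simp [Complex.im_ofReal_mul, Complex.mul_im, Complex.exp_ofReal_mul_I_re,
        Complex.exp_ofReal_mul_I_im]
    rw [hpairsum, hTT, hVre, hVim]
    -- the trajectory and its derivative
    have hzfun : z j = fun s => (r * Real.cos (2 * π * ((j:ℕ) + 1) / N + a * s),
        r * Real.sin (2 * π * ((j:ℕ) + 1) / N + a * s)) := by
      funext s
      rw [hz]
      simp [hjN]
    rw [hzfun]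
    have hφ : HasDerivAt (fun s : ℝ => 2 * π * ((j:ℕ) + 1) / N + a * s) a t := by
      simpa using ((hasDerivAt_id t).const_mul a).const_add (2 * π * ((j:ℕ) + 1) / N)
    have h1 : HasDerivAt (fun s : ℝ => r * Real.cos (2 * π * ((j:ℕ) + 1) / N + a * s))
        (r * (-Real.sin (θf (j:ℕ)) * a)) t := by
      have := ((Real.hasDerivAt_cos (2 * π * ((j:ℕ) + 1) / N + a * t)).comp t hφ).const_mul r
      simpa [hθf, Function.comp] using this
    have h2 : HasDerivAt (fun s : ℝ => r * Real.sin (2 * π * ((j:ℕ) + 1) / N + a * s))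
        (r * (Real.cos (θf (j:ℕ)) * a)) t := by
      have := ((Real.hasDerivAt_sin (2 * π * ((j:ℕ) + 1) / N + a * t)).comp t hφ).const_mul r
      simpa [hθf, Function.comp] using this
    have := h1.prodMk h2
    convert this using 2 <;> ring
  · -- central vortex
    have hjlast : (j : ℕ) = N := by omega
    have hTT : (∑ l ∈ Finset.univ.erase j, c l) = 0 := by
      rw [hsum_univ, Fin.sum_univ_castSucc c]
      have hclast : c (Fin.last N) = 0 := by
        have : Fin.last N = j := by
          apply Fin.ext; simp [hjlast]
        rw [this, hcj]
      rw [hclast, add_zero]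
      have hterm : ∀ i : Fin N, c i.castSucc
          = (-(Γ / (2 * π * r))) • (Complex.I * E (i : ℕ)) := by
        intro i
        have hvlt : (i.castSucc : Fin (N + 1)).val < N := by simp [i.isLt]
        rw [hc]
        simp only
        rw [hWj _ hvlt, hWlast j hjN, hΓv, if_pos hvlt]
        have hn : Complex.normSq ((0 : ℂ) - (r : ℂ) * E ((i.castSucc : Fin (N+1)) : ℕ))
            = r ^ 2 := by
          rw [zero_sub, Complex.normSq_neg, Complex.normSq_mul, Complex.normSq_ofReal,
            hnormE, mul_one, sq]
        rw [hn, Complex.real_smul, Complex.real_smul]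
        have hcs : ((i.castSucc : Fin (N+1)) : ℕ) = (i : ℕ) := by simp
        rw [hcs]
        have hco : (Γ / (2 * π) / r ^ 2) * r = Γ / (2 * π * r) := by
          field_simp
        have hcoef : ((Γ / (2 * π) / r ^ 2 : ℝ) : ℂ) * (r : ℂ)
            = ((Γ / (2 * π * r) : ℝ) : ℂ) := by exact_mod_cast congrArg Complex.ofReal hco
        push_cast at hcoef ⊢
        linear_combination (-(Complex.I * E (i : ℕ))) * hcoef
      rw [Finset.sum_congr rfl fun i _ => hterm i, ← Finset.smul_sum]
      have hEsum : (∑ i : Fin N, Complex.I * E (i : ℕ)) = 0 := by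
        rw [← Finset.mul_sum]
        have : (∑ i : Fin N, E (i : ℕ)) = ∑ k ∈ Finset.range N, E k :=
          Fin.sum_univ_eq_sum_range E N
        rw [this]
        have hEk : ∀ k ∈ Finset.range N, E k = E 0 * ω ^ k := by
          intro k _
          rw [← hEadd, Nat.zero_add]
        rw [Finset.sum_congr rfl hEk, ← Finset.mul_sum, geom_sum_eq hωne1, hωN]
        simp
      rw [hEsum, smul_zero]
    rw [hpairsum, hTT]
    have hzfun : z j = fun _ => ((0 : ℝ), (0 : ℝ)) := by
      funext s
      rw [hz]
      simp [hjN]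
    rw [hzfun]
    rw [Complex.zero_re, Complex.zero_im]
    exact hasDerivAt_const t ((0 : ℝ), (0 : ℝ))
end

section
/- Let N ≥ 2 be an integer, ζ = exp(2πi/N), and let p : ℂ → ℂ be the polynomial p(z) = Σ_{j=0}^{N−1} z^j. Then p(1) = N ≠ 0 and for every integer n ≥ 1, Σ_{l=1}^{N−1} 1/(ζ^l − 1)^n = −(1/(n−1)!) · D^{(n−1)}(z ↦ p'(z)/p(z))(1), where D^{(n−1)} denotes the (n−1)-st iterated derivative of the function z ↦ p'(z)/p(z) evaluated at z = 1. -/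
open Real Finset Polynomial

/-- With `ζ = exp(2πi/N)` and `p(z) = ∑_{j<N} z^j`, one has `p(1) = N ≠ 0` and, for every
`n ≥ 1`, `S_{n,0} = ∑_{l=1}^{N-1} (ζ^l - 1)^{-n} = -(1/(n-1)!) (p'/p)^{(n-1)}(1)`. -/
theorem Snzero_via_log_derivative (N : ℕ) (hN : 2 ≤ N) :
    (∑ j ∈ Finset.range N, (1 : ℂ) ^ j) = (N : ℂ) ∧ (N : ℂ) ≠ 0 ∧
    ∀ n : ℕ, 1 ≤ n →
      (∑ l ∈ Finset.Ico 1 N,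
          (1 : ℂ) / ((Complex.exp (2 * π * Complex.I / N)) ^ l - 1) ^ n) =
        -((1 : ℂ) / (Nat.factorial (n - 1) : ℂ)) *
          iteratedDeriv (n - 1)
            (fun z : ℂ =>
              deriv (fun w : ℂ => ∑ j ∈ Finset.range N, w ^ j) z /
                (∑ j ∈ Finset.range N, z ^ j)) 1 := by
  have hN0 : N ≠ 0 := by omega
  set ζ : ℂ := Complex.exp (2 * π * Complex.I / N) with hζdef
  have hζ : IsPrimitiveRoot ζ N := Complex.isPrimitiveRoot_exp N hN0
  refine ⟨by simp, Nat.cast_ne_zero.mpr hN0, ?_⟩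
  have hinj : ∀ i ∈ Finset.range N, ∀ j ∈ Finset.range N,
      ζ ^ i = ζ ^ j → i = j := fun i hi j hj h =>
    hζ.pow_inj (Finset.mem_range.mp hi) (Finset.mem_range.mp hj) h
  have hfinimg : ((Finset.range N).image fun i => ζ ^ i) = Polynomial.nthRootsFinset N (1 : ℂ) := by
    apply Finset.eq_of_subset_of_card_le
    · intro x hx
      simp only [Finset.mem_image] at hx
      obtain ⟨i, _, rfl⟩ := hx
      rw [Polynomial.mem_nthRootsFinset (by omega)]
      rw [← pow_mul, mul_comm, pow_mul, hζ.pow_eq_one, one_pow]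
    · rw [hζ.card_nthRootsFinset, Finset.card_image_of_injOn hinj, Finset.card_range]
  have hP : (∑ j ∈ Finset.range N, (X : ℂ[X]) ^ j) = ∏ l ∈ Finset.Ico 1 N, (X - C (ζ ^ l)) := by
    have h1 : ((X : ℂ[X]) ^ N - 1) = ∏ i ∈ Finset.range N, (X - C (ζ ^ i)) := by
      rw [X_pow_sub_one_eq_prod (by omega) hζ, ← hfinimg,
        Finset.prod_image fun i hi j hj h => hinj i hi j hj (by simpa using h)]
    have h2 : (∑ j ∈ Finset.range N, (X : ℂ[X]) ^ j) * (X - 1) =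
        (∏ l ∈ Finset.Ico 1 N, (X - C (ζ ^ l))) * (X - 1) := by
      rw [geom_sum_mul, h1, Finset.range_eq_Ico,
        Finset.prod_eq_prod_Ico_succ_bot (by omega : 0 < N)]
      rw [pow_zero, map_one, mul_comm]
    have hX1 : (X - 1 : ℂ[X]) ≠ 0 := by
      intro h
      have := congrArg (Polynomial.eval 0) h
      simp at this
    exact mul_right_cancel₀ hX1 h2
  set p : ℂ → ℂ := fun z => ∑ j ∈ Finset.range N, z ^ j with hpdef
  have hpeval : ∀ z : ℂ, p z = Polynomial.eval z (∑ j ∈ Finset.range N, (X : ℂ[X]) ^ j) := by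
    intro z; simp [hpdef, Polynomial.eval_finset_sum]
  have hpprod : ∀ z : ℂ, p z = ∏ l ∈ Finset.Ico 1 N, (z - ζ ^ l) := by
    intro z; rw [hpeval, hP]; simp [Polynomial.eval_prod]
  have hderiv : ∀ z : ℂ, deriv p z =
      ∑ l ∈ Finset.Ico 1 N, ∏ m ∈ (Finset.Ico 1 N).erase l, (z - ζ ^ m) := by
    intro z
    rw [show p = fun z => ∏ l ∈ Finset.Ico 1 N, (z - ζ ^ l) from funext hpprod]
    have hd := (HasDerivAt.fun_finsetProd
      (fun l (_ : l ∈ Finset.Ico 1 N) => (hasDerivAt_id z).sub_const (ζ ^ l))).deriv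
    simpa using hd
  set U : Set ℂ := {z | ∀ l ∈ Finset.Ico 1 N, z ≠ ζ ^ l} with hUdef
  have hUopen : IsOpen U := by
    have : U = ⋂ l ∈ Finset.Ico 1 N, {ζ ^ l}ᶜ := by
      ext z; simp [hUdef, Set.mem_iInter]
    rw [this]
    exact isOpen_biInter_finset fun l _ => isOpen_compl_singleton
  have h1U : (1 : ℂ) ∈ U := by
    intro l hl h
    exact hζ.pow_ne_one_of_pos_of_lt (Nat.one_le_iff_ne_zero.mp (Finset.mem_Ico.mp hl).1) (Finset.mem_Ico.mp hl).2 h.symm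
  set g : ℕ → ℂ → ℂ := fun k z => ∑ l ∈ Finset.Ico 1 N, ((z - ζ ^ l) ^ (k + 1))⁻¹ with hgdef
  have hgderiv : ∀ k : ℕ, ∀ z ∈ U, HasDerivAt (g k) (-(k + 1 : ℂ) * g (k + 1) z) z := by
    intro k z hz
    have h : HasDerivAt (fun z => ∑ l ∈ Finset.Ico 1 N, ((z - ζ ^ l) ^ (k + 1))⁻¹)
        (∑ l ∈ Finset.Ico 1 N, (-(k + 1 : ℂ) * ((z - ζ ^ l) ^ (k + 2))⁻¹)) z := by
      apply HasDerivAt.fun_sum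
      intro l hl
      have hzl : z - ζ ^ l ≠ 0 := sub_ne_zero.mpr (hz l hl)
      have h1 : HasDerivAt (fun z : ℂ => (z - ζ ^ l) ^ (k + 1))
          (((k : ℂ) + 1) * (z - ζ ^ l) ^ k) z := by
        have := ((hasDerivAt_id z).sub_const (ζ ^ l)).fun_pow (k + 1)
        simpa using this
      have h2 := h1.fun_inv (pow_ne_zero _ hzl)
      convert h2 using 1
      · rfl
      field_simp
      ring
    convert h using 1
    simp [hgdef, Finset.mul_sum]
  set f : ℂ → ℂ := fun z => deriv p z / p z with hfdef
  have hf_eq : Set.EqOn f (g 0) U := by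
    intro z hz
    have hzl : ∀ l ∈ Finset.Ico 1 N, z - ζ ^ l ≠ 0 := fun l hl => sub_ne_zero.mpr (hz l hl)
    simp only [hfdef, hgdef]
    rw [hderiv, hpprod z, Finset.sum_div]
    apply Finset.sum_congr rfl
    intro l hl
    rw [← Finset.mul_prod_erase _ _ hl, pow_one, mul_comm (z - ζ ^ l), ← div_div,
      div_self (Finset.prod_ne_zero_iff.mpr fun m hm => hzl m (Finset.mem_of_mem_erase hm)),
      one_div]
  have hiter : ∀ k : ℕ, Set.EqOn (iteratedDeriv k f)
      (fun z => (-1 : ℂ) ^ k * (Nat.factorial k : ℂ) * g k z) U := by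
    intro k
    induction k with
    | zero => intro z hz; simpa using hf_eq hz
    | succ k ih =>
      intro z hz
      rw [iteratedDeriv_succ]
      have hev : iteratedDeriv k f =ᶠ[nhds z]
          fun z => (-1 : ℂ) ^ k * (Nat.factorial k : ℂ) * g k z :=
        Filter.eventuallyEq_of_mem (hUopen.mem_nhds hz) ih
      rw [hev.deriv_eq]
      have hd : HasDerivAt (fun z => (-1 : ℂ) ^ k * (Nat.factorial k : ℂ) * g k z)
          ((-1 : ℂ) ^ k * (Nat.factorial k : ℂ) * (-(k + 1 : ℂ) * g (k + 1) z)) z :=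
        (hgderiv k z hz).const_mul _
      rw [hd.deriv]
      push_cast [Nat.factorial_succ]
      ring
  intro n hn
  obtain ⟨m, rfl⟩ : ∃ m, n = m + 1 := ⟨n - 1, by omega⟩
  have key := hiter m h1U
  simp only [Nat.add_sub_cancel]
  rw [key]
  have hfac : (Nat.factorial m : ℂ) ≠ 0 := Nat.cast_ne_zero.mpr (Nat.factorial_ne_zero m)
  rw [show -((1 : ℂ) / (Nat.factorial m : ℂ)) *
      ((-1 : ℂ) ^ m * (Nat.factorial m : ℂ) * g m 1) = (-1 : ℂ) ^ (m + 1) * g m 1 by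
    field_simp; ring]
  simp only [hgdef, Finset.mul_sum]
  apply Finset.sum_congr rfl
  intro l hl
  rw [show (ζ ^ l - 1) = -(1 - ζ ^ l) by ring, one_div, neg_pow, mul_inv, ← inv_pow,
    inv_neg, inv_one]
end

section
/- Let N ≥ 2 be an integer and ζ = exp(2πi/N). Then Σ_{l=1}^{N−1} ζ^l/(ζ^l − 1)² = (1 − N²)/12, i.e. S_{2,1} = (1 − N²)/12. -/
open Real Finset

/-- `S_{n,k} = ∑_{l=1}^{N-1} ζ^{lk}/(ζ^l - 1)^n`, where `ζ = exp(2πi/N)`. -/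
noncomputable def S (N n k : ℕ) : ℂ :=
  ∑ l ∈ Finset.Ico 1 N,
    (Complex.exp (2 * π * Complex.I / N)) ^ (l * k) /
      ((Complex.exp (2 * π * Complex.I / N)) ^ l - 1) ^ n

lemma sumA (x : ℂ) (N : ℕ) :
    (∑ j ∈ range N, (j:ℂ) * x^j) * (x-1)
      = ((N:ℂ)-1)*x^N - ∑ j ∈ range N, x^j + 1 := by
  induction N with
  | zero => simp
  | succ n ih =>
    rw [sum_range_succ, sum_range_succ]
    push_cast
    linear_combination ih

lemma sumT (x : ℂ) (N : ℕ) :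
    (∑ j ∈ range N, (j:ℂ) * ((N:ℂ) - j) * x^j) * (x-1)^2
      = ((N:ℂ)-1)*x^(N+1) - 2*x^N + ((N:ℂ)+1)*x + 2
        - 2*∑ j ∈ range N, x^j := by
  induction N with
  | zero => simp; ring
  | succ n ih =>
    have hsplit : ∑ j ∈ range (n+1), (j:ℂ) * (((n:ℂ)+1) - j) * x^j
        = (∑ j ∈ range n, (j:ℂ) * ((n:ℂ) - j) * x^j)
          + ∑ j ∈ range (n+1), (j:ℂ) * x^j := by
      rw [show (∑ j ∈ range (n+1), (j:ℂ) * (((n:ℂ)+1) - j) * x^j)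
          = ∑ j ∈ range (n+1), ((j:ℂ) * ((n:ℂ) - j) * x^j + (j:ℂ) * x^j) from
        Finset.sum_congr rfl (fun j _ => by ring), Finset.sum_add_distrib,
        sum_range_succ (fun j => (j:ℂ) * ((n:ℂ) - j) * x^j)]
      ring
    push_cast
    rw [hsplit, sum_range_succ (fun j => x^j)]
    have hA := sumA x (n+1)
    push_cast at hA
    linear_combination ih + (x-1) * hA - geom_sum_mul x (n+1)

lemma key (x : ℂ) (N : ℕ) (hN : (N:ℂ) ≠ 0) (h1 : x^N = 1) (hx : x ≠ 1) :
    x/(x-1)^2 = (∑ j ∈ range N, (j:ℂ) * ((N:ℂ) - j) * x^j) / (2*N) := by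
  have hx' : x - 1 ≠ 0 := sub_ne_zero.mpr hx
  have hG : ∑ j ∈ range N, x^j = 0 := by
    have h := geom_sum_mul x N
    rw [h1, sub_self] at h
    exact (mul_eq_zero.mp h).resolve_right hx'
  have hT := sumT x N
  rw [hG, show x^(N+1) = x^N * x from pow_succ x N, h1] at hT
  rw [div_eq_div_iff (pow_ne_zero 2 hx') (mul_ne_zero two_ne_zero hN)]
  linear_combination -hT

lemma sum_id (N : ℕ) : ∑ j ∈ range N, (j:ℂ) = (N:ℂ)*((N:ℂ)-1)/2 := by
  induction N with
  | zero => simp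
  | succ n ih => rw [sum_range_succ, ih]; push_cast; ring

lemma sum_sq (N : ℕ) : ∑ j ∈ range N, (j:ℂ)^2 = (N:ℂ)*((N:ℂ)-1)*(2*(N:ℂ)-1)/6 := by
  induction N with
  | zero => simp
  | succ n ih => rw [sum_range_succ, ih]; push_cast; ring

/-- `S_{2,1} = ∑_{l=1}^{N-1} ζ^l/(ζ^l - 1)² = (1 - N²)/12`. -/
theorem S_two_one (N : ℕ) (hN : 2 ≤ N) : S N 2 1 = (1 - (N : ℂ) ^ 2) / 12 := by
  set ζ := Complex.exp (2 * π * Complex.I / N) with hζ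
  have hN0 : N ≠ 0 := by omega
  have hNC : (N:ℂ) ≠ 0 := Nat.cast_ne_zero.mpr hN0
  have hprim : IsPrimitiveRoot ζ N := Complex.isPrimitiveRoot_exp N hN0
  have hpow : ∀ m : ℕ, (ζ ^ m) ^ N = 1 := by
    intro m
    rw [← pow_mul, mul_comm, pow_mul, hprim.pow_eq_one, one_pow]
  have hne : ∀ m ∈ Ico 1 N, ζ ^ m ≠ 1 := by
    intro m hm
    rw [mem_Ico] at hm
    exact hprim.pow_ne_one_of_pos_of_lt (by have := hm.1; omega) hm.2
  have step1 : S N 2 1 = ∑ l ∈ Ico 1 N,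
      (∑ j ∈ range N, (j:ℂ) * ((N:ℂ) - j) * (ζ^l)^j) / (2*N) := by
    unfold S
    refine Finset.sum_congr rfl (fun l hl => ?_)
    rw [mul_one]
    exact key (ζ^l) N hNC (hpow l) (hne l hl)
  rw [step1, ← Finset.sum_div]
  have swap : ∑ l ∈ Ico 1 N, ∑ j ∈ range N, (j:ℂ) * ((N:ℂ) - j) * (ζ^l)^j
      = ∑ j ∈ range N, (j:ℂ) * ((N:ℂ) - j) * (-1) := by
    rw [Finset.sum_comm]
    refine Finset.sum_congr rfl (fun j hj => ?_)
    rcases Nat.eq_zero_or_pos j with h0 | hpos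
    · subst h0; simp
    · rw [← Finset.mul_sum]
      congr 1
      have hinner : ∑ l ∈ Ico 1 N, (ζ^l)^j = ∑ l ∈ Ico 1 N, (ζ^j)^l := by
          refine Finset.sum_congr rfl (fun l _ => ?_)
          rw [← pow_mul, ← pow_mul, mul_comm]
      rw [hinner, Finset.sum_Ico_eq_sub _ (by omega : 1 ≤ N), sum_range_one, pow_zero]
      have hj' : ζ^j ≠ 1 := hne j (mem_Ico.mpr ⟨hpos, mem_range.mp hj⟩)
      rw [geom_sum_eq hj', hpow j, sub_self, zero_div]
      ring
  rw [swap]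
  have : ∑ j ∈ range N, (j:ℂ) * ((N:ℂ) - j) * (-1)
      = ∑ j ∈ range N, ((j:ℂ)^2 - (N:ℂ) * j) := by
    exact Finset.sum_congr rfl (fun j _ => by ring)
  rw [this, Finset.sum_sub_distrib, sum_sq, ← Finset.mul_sum, sum_id]
  field_simp
  ring
end

section
/- Let N ≥ 2 be an integer and ζ = exp(2πi/N). Then Σ_{l=1}^{N−1} ζ^{2l}/(ζ^l − 1)² = −(N−1)(N−5)/12, i.e. S_{2,2} = −(N−1)(N−5)/12. Consequently the critical central circulation γ_N* = (N−1)(N−5)/12 of the paper satisfies γ_N* = −S_{2,2}. -/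
open Real Finset

-- telescoping identity
lemma sum_mul_geom (x : ℂ) (n : ℕ) :
    (x - 1) * ∑ k ∈ range n, (k : ℂ) * x ^ k
      = n * x ^ n - x * ∑ k ∈ range n, x ^ k := by
  induction n with
  | zero => simp
  | succ n ih =>
      rw [sum_range_succ, sum_range_succ, mul_add]
      push_cast
      linear_combination ih

lemma sumk (n : ℕ) : ∑ k ∈ range n, (k : ℂ) = n * (n - 1) / 2 := by
  induction n with
  | zero => simp
  | succ n ih =>
      rw [sum_range_succ]
      push_cast
      linear_combination ih

lemma sumkc (c : ℂ) (n : ℕ) :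
    ∑ k ∈ range n, (k : ℂ) * (c - k)
      = c * n * (n - 1) / 2 - (2 * n ^ 3 - 3 * n ^ 2 + n) / 6 := by
  induction n with
  | zero => simp
  | succ n ih =>
      rw [sum_range_succ]
      push_cast
      linear_combination ih

lemma uniq_j (N k j j' : ℕ) (hj : j < N) (hj' : j' < N)
    (h : N ∣ k + j + 2) (h' : N ∣ k + j' + 2) : j = j' := by
  have hd : (N : ℤ) ∣ (j : ℤ) - j' := by
    have h1 : (N : ℤ) ∣ ((k : ℤ) + j + 2) := by exact_mod_cast Int.natCast_dvd_natCast.2 h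
    have h2 : (N : ℤ) ∣ ((k : ℤ) + j' + 2) := by exact_mod_cast Int.natCast_dvd_natCast.2 h'
    have := dvd_sub h1 h2
    simpa using this
  have := Int.eq_zero_of_abs_lt_dvd hd (by
    rw [abs_sub_lt_iff]
    constructor <;> omega)
  omega

/-- `S_{2,2} = ∑_{l=1}^{N-1} ζ^{2l}/(ζ^l - 1)² = -(N-1)(N-5)/12`; consequently the
critical central circulation `γ_N* = (N-1)(N-5)/12` satisfies `γ_N* = -S_{2,2}`. -/
theorem S_two_two (N : ℕ) (hN : 2 ≤ N) :
    S N 2 2 = -(((N : ℂ) - 1) * ((N : ℂ) - 5)) / 12 ∧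
    ((((N : ℝ) - 1) * ((N : ℝ) - 5) / 12 : ℝ) : ℂ) = -S N 2 2 := by
  have hN0 : (N : ℂ) ≠ 0 := Nat.cast_ne_zero.2 (by omega)
  set ζ : ℂ := Complex.exp (2 * π * Complex.I / N) with hζdef
  have hprim : IsPrimitiveRoot ζ N := Complex.isPrimitiveRoot_exp N (by omega)
  have hζN : ζ ^ N = 1 := hprim.pow_eq_one
  -- geometric sum over l
  have lsum : ∀ m : ℕ, ∑ l ∈ Ico 1 N, (ζ ^ m) ^ l
      = (if N ∣ m then (N : ℂ) else 0) - 1 := by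
    intro m
    have hsplit : ∑ l ∈ range N, (ζ ^ m) ^ l = 1 + ∑ l ∈ Ico 1 N, (ζ ^ m) ^ l := by
      rw [range_eq_Ico, Finset.sum_eq_sum_Ico_succ_bot (by omega : 0 < N)]
      simp
    have hfull : ∑ l ∈ range N, (ζ ^ m) ^ l = if N ∣ m then (N : ℂ) else 0 := by
      split_ifs with h
      · have h1 : ζ ^ m = 1 := (hprim.pow_eq_one_iff_dvd m).2 h
        simp [h1]
      · have hne : ζ ^ m ≠ 1 := fun hc => h ((hprim.pow_eq_one_iff_dvd m).1 hc)
        rw [geom_sum_eq hne, ← pow_mul, mul_comm m N, pow_mul, hζN, one_pow]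
        simp
    rw [hsplit] at hfull
    linear_combination hfull
  -- key identity per l
  have hkey : ∀ l ∈ Ico 1 N, ∑ k ∈ range N, (k : ℂ) * (ζ ^ l) ^ k
      = (N : ℂ) / (ζ ^ l - 1) := by
    intro l hl
    rw [Finset.mem_Ico] at hl
    have hx1 : ζ ^ l ≠ 1 := hprim.pow_ne_one_of_pos_of_lt (by omega) hl.2
    have hxs : ζ ^ l - 1 ≠ 0 := sub_ne_zero.2 hx1
    have hgeo : ∑ k ∈ range N, (ζ ^ l) ^ k = 0 := by
      rw [geom_sum_eq hx1, ← pow_mul, mul_comm l N, pow_mul, hζN, one_pow]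
      simp
    have h := sum_mul_geom (ζ ^ l) N
    rw [hgeo, ← pow_mul, mul_comm l N, pow_mul, hζN, one_pow] at h
    field_simp
    linear_combination h
  -- per-l expansion of the square
  have hpow : ∀ (l m : ℕ), (ζ ^ l) ^ m = (ζ ^ m) ^ l := fun l m => by
    rw [← pow_mul, mul_comm, pow_mul]
  have per_l : ∀ l ∈ Ico 1 N,
      ∑ k ∈ range N, ∑ j ∈ range N, ((k : ℂ) * j) * (ζ ^ l) ^ (k + j + 2)
        = (N : ℂ) ^ 2 * (ζ ^ (l * 2) / (ζ ^ l - 1) ^ 2) := by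
    intro l hl
    have hl' := Finset.mem_Ico.1 hl
    have hx1 : ζ ^ l ≠ 1 := hprim.pow_ne_one_of_pos_of_lt (by omega) hl'.2
    have hxs : ζ ^ l - 1 ≠ 0 := sub_ne_zero.2 hx1
    have hterm : ∀ k j : ℕ, ((k : ℂ) * j) * (ζ ^ l) ^ (k + j + 2)
        = ((k : ℂ) * (ζ ^ l) ^ k) * (((j : ℂ) * (ζ ^ l) ^ j) * (ζ ^ l) ^ 2) := by
      intro k j; rw [pow_add, pow_add]; ring
    simp_rw [hterm]
    simp_rw [← Finset.mul_sum]
    simp_rw [← Finset.sum_mul]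
    rw [hkey l hl, pow_mul]
    field_simp
  -- main transformation
  have step1 : (N : ℂ) ^ 2 * S N 2 2
      = ∑ k ∈ range N, ∑ j ∈ range N, ((k : ℂ) * j)
          * ((if N ∣ (k + j + 2) then (N : ℂ) else 0) - 1) := by
    have swap : ∑ k ∈ range N, ∑ j ∈ range N, ∑ l ∈ Ico 1 N,
          ((k : ℂ) * j) * (ζ ^ l) ^ (k + j + 2)
        = ∑ l ∈ Ico 1 N, ∑ k ∈ range N, ∑ j ∈ range N,
          ((k : ℂ) * j) * (ζ ^ l) ^ (k + j + 2) :=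
      calc ∑ k ∈ range N, ∑ j ∈ range N, ∑ l ∈ Ico 1 N,
            ((k : ℂ) * j) * (ζ ^ l) ^ (k + j + 2)
          = ∑ k ∈ range N, ∑ l ∈ Ico 1 N, ∑ j ∈ range N,
            ((k : ℂ) * j) * (ζ ^ l) ^ (k + j + 2) :=
            Finset.sum_congr rfl (fun k _ => Finset.sum_comm)
        _ = ∑ l ∈ Ico 1 N, ∑ k ∈ range N, ∑ j ∈ range N,
            ((k : ℂ) * j) * (ζ ^ l) ^ (k + j + 2) := Finset.sum_comm
    calc (N : ℂ) ^ 2 * S N 2 2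
        = ∑ l ∈ Ico 1 N, (N : ℂ) ^ 2 * (ζ ^ (l * 2) / (ζ ^ l - 1) ^ 2) := by
          rw [S, ← hζdef, Finset.mul_sum]
      _ = ∑ l ∈ Ico 1 N, ∑ k ∈ range N, ∑ j ∈ range N,
            ((k : ℂ) * j) * (ζ ^ l) ^ (k + j + 2) :=
          Finset.sum_congr rfl (fun l hl => (per_l l hl).symm)
      _ = ∑ k ∈ range N, ∑ j ∈ range N, ∑ l ∈ Ico 1 N,
            ((k : ℂ) * j) * (ζ ^ l) ^ (k + j + 2) := swap.symm
      _ = ∑ k ∈ range N, ∑ j ∈ range N, ((k : ℂ) * j)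
            * ∑ l ∈ Ico 1 N, (ζ ^ (k + j + 2)) ^ l := by
          simp_rw [hpow, Finset.mul_sum]
      _ = ∑ k ∈ range N, ∑ j ∈ range N, ((k : ℂ) * j)
            * ((if N ∣ (k + j + 2) then (N : ℂ) else 0) - 1) := by
          simp_rw [lsum]
  -- evaluate the conditional double sum
  have hD : ∑ k ∈ range N, ∑ j ∈ range N,
      (if N ∣ (k + j + 2) then (k : ℂ) * j else 0)
      = (∑ k ∈ range (N - 1), (k : ℂ) * (((N : ℂ) - 2) - k))
        + ((N : ℂ) - 1) * ((N : ℂ) - 1) := by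
    have hinner : ∀ k ∈ range N,
        ∑ j ∈ range N, (if N ∣ (k + j + 2) then (k : ℂ) * j else 0)
          = (k : ℂ) * (((if k + 2 ≤ N then N - 2 - k else N - 1 : ℕ)) : ℂ) := by
      intro k hk
      rw [Finset.mem_range] at hk
      set j0 : ℕ := if k + 2 ≤ N then N - 2 - k else N - 1 with hj0
      have hj0N : j0 < N := by rw [hj0]; split_ifs <;> omega
      have hdvd : N ∣ k + j0 + 2 := by
        rw [hj0]; split_ifs with h
        · exact ⟨1, by omega⟩
        · exact ⟨2, by omega⟩
      rw [Finset.sum_eq_single_of_mem j0 (Finset.mem_range.2 hj0N)]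
      · rw [if_pos hdvd]
      · intro j hj hne
        rw [Finset.mem_range] at hj
        rw [if_neg]
        intro hc
        exact hne (uniq_j N k j j0 hj hj0N hc hdvd)
    rw [Finset.sum_congr rfl hinner]
    have hsucc := Finset.sum_range_succ
      (fun k => (k : ℂ) * (((if k + 2 ≤ N then N - 2 - k else N - 1 : ℕ)) : ℂ)) (N - 1)
    rw [show N - 1 + 1 = N from by omega] at hsucc
    rw [hsucc]
    congr 1
    · apply Finset.sum_congr rfl
      intro k hk
      rw [Finset.mem_range] at hk
      rw [if_pos (by omega)]
      rw [Nat.cast_sub (by omega : k ≤ N - 2), Nat.cast_sub (by omega : 2 ≤ N)]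
      push_cast
      ring
    · rw [if_neg (by omega), Nat.cast_sub (by omega : 1 ≤ N)]
      push_cast
      ring
  -- final arithmetic
  have hfin : (N : ℂ) ^ 2 * S N 2 2
      = (N : ℂ) ^ 2 * (-(((N : ℂ) - 1) * ((N : ℂ) - 5)) / 12) := by
    rw [step1]
    have hterm2 : ∀ k j : ℕ, ((k : ℂ) * j)
        * ((if N ∣ (k + j + 2) then (N : ℂ) else 0) - 1)
        = (if N ∣ (k + j + 2) then (k : ℂ) * j else 0) * N - (k : ℂ) * j := by
      intro k j; split_ifs <;> ring
    simp_rw [hterm2, Finset.sum_sub_distrib, ← Finset.sum_mul, ← Finset.mul_sum,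
      ← Finset.sum_mul]
    rw [hD, sumk N, sumkc ((N : ℂ) - 2) (N - 1),
      Nat.cast_sub (by omega : 1 ≤ N), Nat.cast_one]
    ring
  have hS : S N 2 2 = -(((N : ℂ) - 1) * ((N : ℂ) - 5)) / 12 :=
    mul_left_cancel₀ (pow_ne_zero 2 hN0) hfin
  refine ⟨hS, ?_⟩
  push_cast
  rw [hS]
  ring
end

section
/- Let N ≥ 2 be an integer and ζ = exp(2πi/N). For all integers n ≥ 0 and 0 ≤ k ≤ n, the complex number S_{n,k} = Σ_{l=1}^{N−1} ζ^{lk}/(ζ^l − 1)^n is real, i.e. its imaginary part vanishes. -/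
open Real Finset

/-- For `0 ≤ k ≤ n`, the complex number `S_{n,k}` is real: its imaginary part vanishes. -/
theorem S_is_real (N : ℕ) (hN : 2 ≤ N) (n k : ℕ) (hkn : k ≤ n) : (S N n k).im = 0 := by
  rw [← Complex.conj_eq_iff_im]
  set z := Complex.exp (2 * π * Complex.I / N) with hzdef
  have hN0 : (N : ℂ) ≠ 0 := by exact_mod_cast (by omega : N ≠ 0)
  have hzN : z ^ N = 1 := by
    rw [hzdef, ← Complex.exp_nat_mul]
    rw [show (N : ℂ) * (2 * π * Complex.I / N) = 2 * π * Complex.I by field_simp]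
    exact Complex.exp_two_pi_mul_I
  have hzc : (starRingEnd ℂ) z = z⁻¹ := by
    rw [hzdef, ← Complex.exp_conj, ← Complex.exp_neg]
    congr 1
    simp [map_div₀, Complex.conj_I, map_ofNat]
    ring
  unfold S
  rw [map_sum]
  refine Finset.sum_nbij' (fun l => N - l) (fun l => N - l) ?_ ?_ ?_ ?_ ?_
  · intro a ha; simp only [Finset.mem_Ico] at *; omega
  · intro a ha; simp only [Finset.mem_Ico] at *; omega
  · intro a ha; simp only [Finset.mem_Ico] at ha; omega
  · intro a ha; simp only [Finset.mem_Ico] at ha; omega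
  · intro l hl
    rw [Finset.mem_Ico] at hl
    have hz0 : z ≠ 0 := Complex.exp_ne_zero _
    have key : z ^ (N - l) = (z ^ l)⁻¹ := by
      refine eq_inv_of_mul_eq_one_left ?_
      rw [← pow_add, Nat.sub_add_cancel hl.2.le, hzN]
    rw [map_div₀, map_pow, map_pow, map_sub, map_one, map_pow, hzc]
    rw [pow_mul, pow_mul, key, inv_pow, inv_pow]
end

section
/- Let G : ℝ² → ℝ be the Gaussian G(ξ) = (1/4π) e^{−|ξ|²/4}, and let H : ℝ² → ℝ be continuously differentiable with vanishing Poisson bracket with G, i.e. {H, G}(ξ) = ∂₁H(ξ) ∂₂G(ξ) − ∂₂H(ξ) ∂₁G(ξ) = 0 for every ξ ∈ ℝ². Then H is radially symmetric and factors through G: there exists a function F : ℝ → ℝ such that H(ξ) = F(G(ξ)) for all ξ ∈ ℝ². -/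
open Real

/-- If a `C¹` function `H` on the plane (identified with `ℂ`) has vanishing Poisson bracket
with the Gaussian `G(ξ) = (1/4π) e^{-|ξ|²/4}`, then `H` is radially symmetric and factors
through `G`: there exists `F : ℝ → ℝ` with `H = F ∘ G`. -/
theorem factors_through_gaussian_of_poisson_bracket_vanishes
    (H : ℂ → ℝ) (hH : ContDiff ℝ 1 H)
    (G : ℂ → ℝ) (hG : ∀ ξ : ℂ, G ξ = (1 / (4 * π)) * Real.exp (-‖ξ‖ ^ 2 / 4))
    (hpb : ∀ ξ : ℂ,
      fderiv ℝ H ξ 1 * fderiv ℝ G ξ Complex.I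
        - fderiv ℝ H ξ Complex.I * fderiv ℝ G ξ 1 = 0) :
    ∃ F : ℝ → ℝ, ∀ ξ : ℂ, H ξ = F (G ξ) := by
  have hπ : (0:ℝ) < π := Real.pi_pos
  have hGpos : ∀ ξ : ℂ, 0 < G ξ := by
    intro ξ; rw [hG]; positivity
  have hGfun : G = fun z : ℂ => (1/(4*π)) * Real.exp ((-(1:ℝ)/4) * (z.re*z.re + z.im*z.im)) := by
    funext z
    rw [hG]
    congr 2
    rw [show ‖z‖^2 = z.re*z.re + z.im*z.im from by
      rw [Complex.sq_norm, Complex.normSq_apply]]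
    ring
  -- derivative of G
  have hGd : ∀ ξ : ℂ, HasFDerivAt G
      ((-(G ξ)/2) • (ξ.re • (Complex.reCLM : ℂ →L[ℝ] ℝ) + ξ.im • (Complex.imCLM : ℂ →L[ℝ] ℝ))) ξ := by
    intro ξ
    have hre : HasFDerivAt (fun z : ℂ => z.re) (Complex.reCLM : ℂ →L[ℝ] ℝ) ξ :=
      Complex.reCLM.hasFDerivAt
    have him : HasFDerivAt (fun z : ℂ => z.im) (Complex.imCLM : ℂ →L[ℝ] ℝ) ξ :=
      Complex.imCLM.hasFDerivAt
    have h1 : HasFDerivAt (fun z : ℂ => (-(1:ℝ)/4) * (z.re*z.re + z.im*z.im))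
        ((-(1:ℝ)/2) • (ξ.re • (Complex.reCLM : ℂ →L[ℝ] ℝ) + ξ.im • (Complex.imCLM : ℂ →L[ℝ] ℝ))) ξ := by
      have h := ((hre.mul hre).add (him.mul him)).const_mul (-(1:ℝ)/4)
      refine h.congr_fderiv (Eq.symm ?_)
      ext v
      simp
      ring
    have h2 := ((Real.hasDerivAt_exp ((-(1:ℝ)/4) * (ξ.re*ξ.re + ξ.im*ξ.im))).comp_hasFDerivAt ξ h1).const_mul (1/(4*π))
    rw [hGfun]
    refine h2.congr_fderiv (Eq.symm ?_)
    ext v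
    have : G ξ = (1/(4*π)) * Real.exp ((-(1:ℝ)/4) * (ξ.re*ξ.re + ξ.im*ξ.im)) := by rw [hGfun]
    simp [this]
    ring
  have hGd1 : ∀ ξ : ℂ, fderiv ℝ G ξ 1 = (-(G ξ)/2) * ξ.re := by
    intro ξ
    rw [(hGd ξ).fderiv]
    simp
  have hGdI : ∀ ξ : ℂ, fderiv ℝ G ξ Complex.I = (-(G ξ)/2) * ξ.im := by
    intro ξ
    rw [(hGd ξ).fderiv]
    simp
  -- angular derivative of H vanishes
  have hang : ∀ ξ : ℂ, fderiv ℝ H ξ (ξ * Complex.I) = 0 := by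
    intro ξ
    have h := hpb ξ
    rw [hGd1, hGdI] at h
    have h2 : (G ξ / 2) * (ξ.re * fderiv ℝ H ξ Complex.I - ξ.im * fderiv ℝ H ξ 1) = 0 := by
      linarith [h]
    have h3 : ξ.re * fderiv ℝ H ξ Complex.I - ξ.im * fderiv ℝ H ξ 1 = 0 := by
      rcases mul_eq_zero.1 h2 with h4 | h4
      · exact absurd h4 (ne_of_gt (by linarith [hGpos ξ]))
      · exact h4
    have hdecomp : ξ * Complex.I = (-ξ.im : ℝ) • (1:ℂ) + (ξ.re : ℝ) • Complex.I := by
      simp [Complex.ext_iff]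
    rw [hdecomp, map_add, map_smul, map_smul]
    simp only [smul_eq_mul]
    linarith [h3]
  -- radial symmetry
  have hrad : ∀ ξ : ℂ, H ξ = H (‖ξ‖ : ℝ) := by
    intro ξ
    rcases eq_or_ne ξ 0 with rfl | hne
    · simp
    · set r : ℝ := ‖ξ‖ with hr
      have hf : ∀ θ : ℝ, HasDerivAt (fun θ : ℝ => H ((r:ℂ) * Complex.exp (θ * Complex.I)))
          (fderiv ℝ H ((r:ℂ) * Complex.exp (θ * Complex.I))
            (((r:ℂ) * Complex.exp (θ * Complex.I)) * Complex.I)) θ := by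
        intro θ
        have h1 : HasDerivAt (fun θ : ℝ => (θ : ℂ) * Complex.I) Complex.I θ := by
          simpa using (Complex.ofRealCLM.hasDerivAt (x := θ)).mul_const Complex.I
        have h2 : HasDerivAt (fun θ : ℝ => (r:ℂ) * Complex.exp ((θ:ℂ) * Complex.I))
            ((r:ℂ) * (Complex.exp ((θ:ℂ) * Complex.I) * Complex.I)) θ :=
          ((Complex.hasDerivAt_exp _).comp θ h1).const_mul (r:ℂ)
        have h3 := (hH.differentiable (by norm_num) _).hasFDerivAt.comp_hasDerivAt θ h2
        refine h3.congr_deriv (Eq.symm ?_)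
        congr 1
        ring
      have hconst : ∀ a b : ℝ, H ((r:ℂ) * Complex.exp (a * Complex.I))
          = H ((r:ℂ) * Complex.exp (b * Complex.I)) := by
        intro a b
        exact is_const_of_deriv_eq_zero
          (f := fun θ : ℝ => H ((r:ℂ) * Complex.exp (θ * Complex.I)))
          (fun θ => (hf θ).differentiableAt)
          (fun θ => by rw [(hf θ).deriv]; exact hang _) a b
      have hx : (r:ℂ) * Complex.exp (ξ.arg * Complex.I) = ξ := by
        rw [hr]
        exact_mod_cast Complex.norm_mul_exp_arg_mul_I ξ
      calc H ξ = H ((r:ℂ) * Complex.exp (ξ.arg * Complex.I)) := by rw [hx]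
        _ = H ((r:ℂ) * Complex.exp ((0:ℝ) * Complex.I)) := hconst _ _
        _ = H (r:ℂ) := by norm_num
  -- construct F
  refine ⟨fun t => H ((Real.sqrt (-(4 * Real.log (4 * π * t))) : ℝ) : ℂ), fun ξ => ?_⟩
  have h1 : 4 * π * G ξ = Real.exp (-‖ξ‖^2/4) := by
    rw [hG]; field_simp
  have h2 : Real.log (4 * π * G ξ) = -‖ξ‖^2/4 := by
    rw [h1, Real.log_exp]
  have h3 : -(4 * Real.log (4 * π * G ξ)) = ‖ξ‖^2 := by
    rw [h2]; ring
  rw [hrad ξ]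
  congr 2
  rw [h3, Real.sqrt_sq (norm_nonneg ξ)]
end
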